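/- Let K be a probabilistic theory and let M₁, …, Mₙ be observables on K. Then the compatibility region J(M₁, …, Mₙ) is a convex subset of [0,1]ⁿ. -/

import Mathlib

open MeasureTheory

variable {V : Type*} [NormedAddCommGroup V] [NormedSpace ℝ V] [CompleteSpace V]

/-- A probabilistic theory: a σ-convex subset `K` of a real Banach space `V`.
Whenever `λᵢ ∈ [0,1]` with `∑ λᵢ = 1` and `vᵢ ∈ K`, the series `∑ λᵢ vᵢ`
converges in norm to an element of `K`. -/
def SigmaConvex (K : Set V) : Prop :=
  ∀ (lam : ℕ → ℝ) (v : ℕ → V), (∀ i, 0 ≤ lam i) → (∀ i, v i ∈ K) →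
    HasSum lam 1 → ∃ s ∈ K, HasSum (fun i => lam i • v i) s

/-- An (`α`-valued) observable on `K`: a σ-affine map from `K` to the Borel
probability measures on `α`.  Taking `α = ℝ` gives ordinary (1-dimensional)
observables, and `α = Fin n → ℝ` gives `n`-dimensional observables. -/
structure Observable (K : Set V) (α : Type*) [MeasurableSpace α] where
  toFun : K → Measure α
  prob : ∀ s, IsProbabilityMeasure (toFun s)
  sigmaAffine : ∀ (lam : ℕ → ℝ) (v : ℕ → K) (s : K), (∀ i, 0 ≤ lam i) →
    HasSum lam 1 → HasSum (fun i => lam i • (v i : V)) (s : V) →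
    ∀ A : Set α, MeasurableSet A →
      toFun s A = ∑' i, ENNReal.ofReal (lam i) * toFun (v i) A

/-- Observables `M₁, …, Mₙ` on `K` are compatible if they have a joint
observable: an `n`-dimensional observable whose `i`-th marginal is `Mᵢ`
(where the `i`-th marginal of `J` is `s ↦ (A ↦ J s {x | x i ∈ A})`,
i.e. evaluation on the cylinder set `ℝ × ⋯ × A × ⋯ × ℝ`). -/
def Compatible {K : Set V} {n : ℕ} (Ms : Fin n → Observable K ℝ) : Prop :=
  ∃ J : Observable K (Fin n → ℝ), ∀ (s : K) (A : Set ℝ), MeasurableSet A →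
    ∀ i, J.toFun s {x | x i ∈ A} = (Ms i).toFun s A

/-- A trivial observable: one that is constantly equal to a fixed Borel
probability measure `p` on `ℝ`. -/
def IsTrivial {K : Set V} (T : Observable K ℝ) : Prop :=
  ∃ p : Measure ℝ, ∀ s, T.toFun s = p

/-- The compatibility region `J(M₁, …, Mₙ)`: the set of `(λ₁, …, λₙ) ∈ [0,1]ⁿ`
for which there exist trivial observables `T₁, …, Tₙ` such that the noisy
versions `λᵢ Mᵢ + (1 - λᵢ) Tᵢ` form a compatible set. -/
def CompatRegion {K : Set V} {n : ℕ} (Ms : Fin n → Observable K ℝ) :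
    Set (Fin n → ℝ) :=
  {lam | (∀ i, lam i ∈ Set.Icc (0 : ℝ) 1) ∧
    ∃ Ts Cs : Fin n → Observable K ℝ, (∀ i, IsTrivial (Ts i)) ∧
      (∀ i (s : K) (A : Set ℝ), MeasurableSet A →
        (Cs i).toFun s A = ENNReal.ofReal (lam i) * (Ms i).toFun s A
          + ENNReal.ofReal (1 - lam i) * (Ts i).toFun s A) ∧
      Compatible Cs}


/-- Convex combination of two observables. -/
noncomputable def mixObs {K : Set V} {α : Type*} [MeasurableSpace α] (a b : ℝ)
    (ha : 0 ≤ a) (hb : 0 ≤ b) (hab : a + b = 1)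
    (O1 O2 : Observable K α) : Observable K α where
  toFun s := ENNReal.ofReal a • O1.toFun s + ENNReal.ofReal b • O2.toFun s
  prob s := by
    have h1 := O1.prob s
    have h2 := O2.prob s
    constructor
    simp [Measure.add_apply, Measure.smul_apply, measure_univ,
      ← ENNReal.ofReal_add ha hb, hab]
  sigmaAffine lam v s h0 hs hv A hA := by
    simp only [Measure.coe_add, Measure.coe_smul, Pi.add_apply, Pi.smul_apply,
      smul_eq_mul]
    rw [O1.sigmaAffine lam v s h0 hs hv A hA, O2.sigmaAffine lam v s h0 hs hv A hA,
      ← ENNReal.tsum_mul_left, ← ENNReal.tsum_mul_left, ← ENNReal.tsum_add]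
    exact tsum_congr fun i => by ring

lemma mixObs_apply {K : Set V} {α : Type*} [MeasurableSpace α] (a b : ℝ)
    (ha : 0 ≤ a) (hb : 0 ≤ b) (hab : a + b = 1)
    (O1 O2 : Observable K α) (s : K) (A : Set α) :
    (mixObs a b ha hb hab O1 O2).toFun s A
      = ENNReal.ofReal a * O1.toFun s A + ENNReal.ofReal b * O2.toFun s A := by
  simp [mixObs]

lemma mix_key (a b p q p' q' : ℝ) (ha : 0 ≤ a) (hb : 0 ≤ b) (hp : 0 ≤ p)
    (hp' : 0 ≤ p') (X Y Z : ENNReal) :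
    ENNReal.ofReal a * (ENNReal.ofReal p * X + ENNReal.ofReal q * Y)
      + ENNReal.ofReal b * (ENNReal.ofReal p' * X + ENNReal.ofReal q' * Z)
      = ENNReal.ofReal (a * p + b * p') * X + ENNReal.ofReal a * ENNReal.ofReal q * Y
        + ENNReal.ofReal b * ENNReal.ofReal q' * Z := by
  rw [mul_add, mul_add, ← mul_assoc, ← mul_assoc, ← mul_assoc, ← mul_assoc,
    ← ENNReal.ofReal_mul ha, ← ENNReal.ofReal_mul hb,
    ENNReal.ofReal_add (mul_nonneg ha hp) (mul_nonneg hb hp'), add_mul]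
  ring

/-- The compatibility region `J(M₁, …, Mₙ)` is a convex
subset of `[0,1]ⁿ`. -/
theorem compatRegion_convex {K : Set V} (hK : SigmaConvex K) {n : ℕ}
    (Ms : Fin n → Observable K ℝ) :
    Convex ℝ (CompatRegion Ms) ∧
      CompatRegion Ms ⊆ Set.Icc (0 : Fin n → ℝ) 1 := by
  classical
  constructor
  · intro lam hlam mu hmu a b ha hb hab
    obtain ⟨hlam01, Ts1, Cs1, hT1, hC1, hComp1⟩ := hlam
    obtain ⟨hmu01, Ts2, Cs2, hT2, hC2, hComp2⟩ := hmu
    obtain ⟨J1, hJ1⟩ := hComp1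
    obtain ⟨J2, hJ2⟩ := hComp2
    have hnu01 : ∀ i, (a • lam + b • mu) i ∈ Set.Icc (0 : ℝ) 1 := by
      intro i
      have := (convex_Icc (0:ℝ) 1) (hlam01 i) (hmu01 i) ha hb hab
      simpa using this
    have hc : ∀ i, 0 ≤ 1 - (a * lam i + b * mu i) := by
      intro i
      have := (hnu01 i).2
      simp only [Pi.add_apply, Pi.smul_apply, smul_eq_mul] at this
      linarith
    have hsum : ∀ i, a * (1 - lam i) + b * (1 - mu i) = 1 - (a * lam i + b * mu i) := by
      intro i; ring_nf; linarith [hab]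
    refine ⟨hnu01, ?_⟩
    refine ⟨fun i =>
      if h : a * lam i + b * mu i = 1 then Ts1 i else
        mixObs (a * (1 - lam i) / (1 - (a * lam i + b * mu i)))
          (b * (1 - mu i) / (1 - (a * lam i + b * mu i)))
          (div_nonneg (mul_nonneg ha (by linarith [(hlam01 i).2])) (hc i))
          (div_nonneg (mul_nonneg hb (by linarith [(hmu01 i).2])) (hc i))
          (by
            rw [← add_div, hsum i, div_self (sub_ne_zero.2 (Ne.symm h))])
          (Ts1 i) (Ts2 i),
      fun i => mixObs a b ha hb hab (Cs1 i) (Cs2 i), ?_, ?_, ?_⟩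
    · intro i
      by_cases h : a * lam i + b * mu i = 1
      · simpa [h] using hT1 i
      · obtain ⟨p, hp⟩ := hT1 i
        obtain ⟨q, hq⟩ := hT2 i
        refine ⟨ENNReal.ofReal (a * (1 - lam i) / (1 - (a * lam i + b * mu i))) • p
          + ENNReal.ofReal (b * (1 - mu i) / (1 - (a * lam i + b * mu i))) • q, ?_⟩
        intro s
        simp [h, mixObs, hp s, hq s]
    · intro i s A hA
      simp only [Pi.add_apply, Pi.smul_apply, smul_eq_mul]
      rw [mixObs_apply, hC1 i s A hA, hC2 i s A hA,
        mix_key a b (lam i) (1 - lam i) (mu i) (1 - mu i) ha hb (hlam01 i).1 (hmu01 i).1]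
      by_cases h : a * lam i + b * mu i = 1
      · have h1 : a * (1 - lam i) = 0 := by
          have h2 := hsum i
          have h3 : (0:ℝ) ≤ a * (1 - lam i) := mul_nonneg ha (by linarith [(hlam01 i).2])
          have h4 : (0:ℝ) ≤ b * (1 - mu i) := mul_nonneg hb (by linarith [(hmu01 i).2])
          linarith
        have h2 : b * (1 - mu i) = 0 := by
          have h2 := hsum i
          have h3 : (0:ℝ) ≤ a * (1 - lam i) := mul_nonneg ha (by linarith [(hlam01 i).2])
          linarith
        rw [dif_pos h, ← ENNReal.ofReal_mul ha, ← ENNReal.ofReal_mul hb, h1, h2]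
        simp [h]
      · rw [dif_neg h]
        rw [mixObs_apply]
        have hcne : (1 : ℝ) - (a * lam i + b * mu i) ≠ 0 := sub_ne_zero.2 (Ne.symm h)
        rw [mul_add, ← mul_assoc, ← mul_assoc,
          ← ENNReal.ofReal_mul (hc i), ← ENNReal.ofReal_mul (hc i),
          mul_div_cancel₀ _ hcne, mul_div_cancel₀ _ hcne,
          ← ENNReal.ofReal_mul ha, ← ENNReal.ofReal_mul hb, ← add_assoc]
    · refine ⟨mixObs a b ha hb hab J1 J2, ?_⟩
      intro s A hA i
      rw [mixObs_apply, hJ1 s A hA i, hJ2 s A hA i, mixObs_apply]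
  · intro lam hlam
    exact Set.mem_Icc.2 ⟨fun i => (hlam.1 i).1, fun i => (hlam.1 i).2⟩
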